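/- Let α be an algebraic number with 0 < α < 1 such that the additive monoid N₀[α] is atomic (with set of atoms {αⁿ : n ∈ ℕ₀}). Then for every k ∈ ℕ₀ and every n ∈ ℕ₀, there exists β ∈ ⟨αʲ : j ≥ k+n⟩ such that αᵏ divides β in N₀[α]. -/

import Mathlib

/-- `N₀[α]`: the additive submonoid of ℝ generated by the powers of `α`. -/
def Nmon (α : ℝ) : AddSubmonoid ℝ := AddSubmonoid.closure (Set.range fun n : ℕ => α ^ n)

/-- `a` is an atom of the submonoid `M`. -/
def IsAtomOf (M : AddSubmonoid ℝ) (a : ℝ) : Prop :=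
  a ∈ M ∧ a ≠ 0 ∧ ∀ b c : ℝ, b ∈ M → c ∈ M → a = b + c → b = 0 ∨ c = 0

/-- `M` is atomic: every nonzero element is a sum of atoms. -/
def IsAtomicM (M : AddSubmonoid ℝ) : Prop :=
  ∀ x ∈ M, x ≠ 0 → ∃ S : Multiset ℝ, (∀ a ∈ S, IsAtomOf M a) ∧ S.sum = x

-- get integer polynomial with nonzero constant coeff, positive constant coeff
lemma getpoly (α : ℝ) (halg : IsAlgebraic ℚ α) (h0 : 0 < α) :
    ∃ g : Polynomial ℤ, Polynomial.aeval α g = 0 ∧ 0 < g.coeff 0 := by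
  obtain ⟨g0, hg0ne, hg0⟩ := (IsFractionRing.isAlgebraic_iff ℤ ℚ ℝ).mpr halg
  set t := g0.natTrailingDegree with ht
  have hdvd : (Polynomial.X : Polynomial ℤ) ^ t ∣ g0 := by
    rw [Polynomial.X_pow_dvd_iff]
    intro d hd
    exact Polynomial.coeff_eq_zero_of_lt_natTrailingDegree hd
  obtain ⟨g1, hg1⟩ := hdvd
  have hc0 : g1.coeff 0 ≠ 0 := by
    have : g0.coeff t = g1.coeff 0 := by
      rw [hg1]; simpa using Polynomial.coeff_X_pow_mul g1 t 0
    rw [← this]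
    have := Polynomial.trailingCoeff_nonzero_iff_nonzero.mpr hg0ne
    simpa [Polynomial.trailingCoeff, ht] using this
  have heval : Polynomial.aeval α g1 = 0 := by
    have : Polynomial.aeval α g0 = α ^ t * Polynomial.aeval α g1 := by
      rw [hg1]; simp [mul_comm]
    rw [hg0] at this
    have hα : α ^ t ≠ 0 := pow_ne_zero _ (ne_of_gt h0)
    rcases mul_eq_zero.mp this.symm with h | h
    · exact absurd h hα
    · exact h
  rcases lt_or_gt_of_ne hc0 with h | h
  · exact ⟨-g1, by simp [heval], by simpa using h⟩
  · exact ⟨g1, heval, h⟩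

lemma key (α : ℝ) (halg : IsAlgebraic ℚ α) (h0 : 0 < α) (m : ℕ) :
    ∃ γ ∈ Nmon α, α ^ m + γ ∈
      AddSubmonoid.closure {x : ℝ | ∃ j : ℕ, m + 1 ≤ j ∧ x = α ^ j} := by
  obtain ⟨g, hg, hc0⟩ := getpoly α halg h0
  set d := g.natDegree with hd
  have heval : (∑ i ∈ Finset.range (d + 1), (g.coeff i : ℝ) * α ^ i) = 0 := by
    have := Polynomial.aeval_eq_sum_range (R := ℤ) (S := ℝ) (p := g) α
    rw [hg] at this
    simp only [zsmul_eq_mul] at this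
    exact this.symm
  -- split off constant term
  have heval' : (g.coeff 0 : ℝ) + ∑ i ∈ Finset.range d, (g.coeff (i + 1) : ℝ) * α ^ (i + 1) = 0 := by
    rw [← heval, Finset.sum_range_succ']
    ring_nf
    simp [add_comm]
    exact Finset.sum_congr rfl fun x _ => by ring
  refine ⟨(g.coeff 0 - 1).toNat • α ^ m +
      ∑ i ∈ Finset.range d, (g.coeff (i + 1)).toNat • α ^ (m + i + 1), ?_, ?_⟩
  · refine AddSubmonoid.add_mem _ (AddSubmonoid.nsmul_mem _ ?_ _)
      (AddSubmonoid.sum_mem _ fun i _ => AddSubmonoid.nsmul_mem _ ?_ _)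
    · exact AddSubmonoid.subset_closure ⟨m, rfl⟩
    · exact AddSubmonoid.subset_closure ⟨m + i + 1, rfl⟩
  · have hkey : α ^ m + ((g.coeff 0 - 1).toNat • α ^ m +
        ∑ i ∈ Finset.range d, (g.coeff (i + 1)).toNat • α ^ (m + i + 1)) =
        ∑ i ∈ Finset.range d, ((-(g.coeff (i + 1))).toNat) • α ^ (m + i + 1) := by
      have hc1 : ((g.coeff 0 - 1).toNat : ℝ) = (g.coeff 0 : ℝ) - 1 := by
        have : ((g.coeff 0 - 1).toNat : ℤ) = g.coeff 0 - 1 := Int.toNat_of_nonneg (by omega)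
        exact_mod_cast this
    -- reduce to the polynomial identity
      have hsub : ∀ i : ℕ, ((g.coeff (i+1)).toNat : ℝ) - ((-(g.coeff (i+1))).toNat : ℝ)
          = (g.coeff (i+1) : ℝ) := by
        intro i
        have : ((g.coeff (i+1)).toNat : ℤ) - ((-(g.coeff (i+1))).toNat : ℤ) = g.coeff (i+1) := by
          omega
        exact_mod_cast this
      simp only [nsmul_eq_mul]
      rw [hc1]
      have expand : ∀ i : ℕ, α ^ (m + i + 1) = α ^ m * α ^ (i + 1) := by
        intro i; rw [← pow_add]; ring_nf
      have hterm : ∀ i ∈ Finset.range d,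
          ((g.coeff (i + 1)).toNat : ℝ) * α ^ (m + i + 1) =
          ((-(g.coeff (i + 1))).toNat : ℝ) * α ^ (m + i + 1) +
            α ^ m * ((g.coeff (i + 1) : ℝ) * α ^ (i + 1)) := by
        intro i _
        rw [expand i]
        linear_combination (hsub i) * (α ^ m * α ^ (i + 1))
      rw [Finset.sum_congr rfl hterm, Finset.sum_add_distrib, ← Finset.mul_sum]
      linear_combination heval' * α ^ m
    rw [hkey]
    exact AddSubmonoid.sum_mem _ fun i _ => AddSubmonoid.nsmul_mem _
      (AddSubmonoid.subset_closure (show _ ∈ {x : ℝ | ∃ j : ℕ, m + 1 ≤ j ∧ x = α ^ j} from ⟨m + i + 1, by omega, rfl⟩)) _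

lemma step (α : ℝ) (halg : IsAlgebraic ℚ α) (h0 : 0 < α) (m : ℕ) :
    ∀ x ∈ AddSubmonoid.closure {x : ℝ | ∃ j : ℕ, m ≤ j ∧ x = α ^ j},
      ∃ δ ∈ Nmon α, x + δ ∈ AddSubmonoid.closure {x : ℝ | ∃ j : ℕ, m + 1 ≤ j ∧ x = α ^ j} := by
  intro x hx
  induction hx using AddSubmonoid.closure_induction with
  | mem x hx =>
    obtain ⟨j, hj, rfl⟩ := hx
    rcases eq_or_lt_of_le hj with rfl | hj'
    · obtain ⟨γ, hγ, hmem⟩ := key α halg h0 m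
      exact ⟨γ, hγ, hmem⟩
    · exact ⟨0, AddSubmonoid.zero_mem _, by
        simpa using AddSubmonoid.subset_closure
          (show _ ∈ {x : ℝ | ∃ i : ℕ, m + 1 ≤ i ∧ x = α ^ i} from ⟨j, hj', rfl⟩)⟩
  | zero => exact ⟨0, AddSubmonoid.zero_mem _, by simpa using AddSubmonoid.zero_mem _⟩
  | add x y _ _ ihx ihy =>
    obtain ⟨δ₁, hδ₁, h₁⟩ := ihx
    obtain ⟨δ₂, hδ₂, h₂⟩ := ihy
    exact ⟨δ₁ + δ₂, AddSubmonoid.add_mem _ hδ₁ hδ₂, by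
      have := AddSubmonoid.add_mem _ h₁ h₂
      convert this using 1; ring⟩

private theorem stmt1_aux (α : ℝ) (halg : IsAlgebraic ℚ α) (h0 : 0 < α) (h1 : α < 1)
    (k n : ℕ) :
    ∃ β ∈ AddSubmonoid.closure {x : ℝ | ∃ j : ℕ, k + n ≤ j ∧ x = α ^ j},
      ∃ γ ∈ Nmon α, β = α ^ k + γ := by
  induction n with
  | zero =>
    refine ⟨α ^ k, AddSubmonoid.subset_closure ⟨k, by omega, rfl⟩, 0,
      AddSubmonoid.zero_mem _, by ring⟩
  | succ n ih =>
    obtain ⟨β, hβ, γ, hγ, heq⟩ := ih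
    obtain ⟨δ, hδ, hmem⟩ := step α halg h0 (k + n) β hβ
    exact ⟨β + δ, hmem, γ + δ, AddSubmonoid.add_mem _ hγ hδ, by rw [heq]; ring⟩

/-- For an algebraic `α` with `0 < α < 1` and `N₀[α]` atomic, for every `k` and `n`
there is `β` in the submonoid generated by `{α^j : j ≥ k + n}` with `α^k ∣ β` in `N₀[α]`. -/
theorem stmt1 (α : ℝ) (halg : IsAlgebraic ℚ α) (h0 : 0 < α) (h1 : α < 1)
    (hat : IsAtomicM (Nmon α)) (k n : ℕ) :
    ∃ β ∈ AddSubmonoid.closure {x : ℝ | ∃ j : ℕ, k + n ≤ j ∧ x = α ^ j},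
      ∃ γ ∈ Nmon α, β = α ^ k + γ := by
  exact stmt1_aux α halg h0 h1 k n
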